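/- Let (A, B) be a pair of n×n real matrices such that there exist positive definite diagonal matrices P, Q with AᵀP + PA + Q + PBQ⁻¹BᵀP ≺ 0 (diagonal Riccati stability). Let S = [[S₁₁, S₁₂],[S₁₂ᵀ, S₂₂]] be a positive semidefinite symmetric 2n×2n matrix with diag(S₁₁) = diag(S₂₂) having all entries strictly positive. Then the pair (A ∘ S₁₁, B ∘ S₁₂) is also diagonally Riccati stable, where ∘ denotes the Hadamard (entrywise) product. -/

import Mathlib

open Matrix

/-- Schur complement criterion (₂₂ block) for positive definiteness, over ℝ. -/
theorem posDef_fromBlocks₂₂' {l m : Type*} [Fintype l] [Fintype m] [DecidableEq m]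
    (A : Matrix l l ℝ) (B : Matrix l m ℝ) {D : Matrix m m ℝ} (hD : D.PosDef) :
    (fromBlocks A B Bᴴ D).PosDef ↔ (A - B * D⁻¹ * Bᴴ).PosDef := by
  haveI : Invertible D := invertibleOfIsUnitDet D (isUnit_iff_ne_zero.mpr hD.det_pos.ne')
  rw [posDef_iff_dotProduct_mulVec, posDef_iff_dotProduct_mulVec]
  constructor
  · rintro ⟨h1, h2⟩
    refine ⟨(IsHermitian.fromBlocks₂₂ A B hD.1).mp h1, fun x hx => ?_⟩
    have hv : (x ⊕ᵥ (-((D⁻¹ * Bᴴ) *ᵥ x))) ≠ 0 := by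
      intro h
      apply hx
      ext i
      exact congrFun h (Sum.inl i)
    have := h2 hv
    rw [dotProduct_mulVec, schur_complement_eq₂₂ A B _ _ hD.1] at this
    simpa [dotProduct_mulVec] using this
  · rintro ⟨h1, h2⟩
    refine ⟨(IsHermitian.fromBlocks₂₂ A B hD.1).mpr h1, fun x hx => ?_⟩
    rw [dotProduct_mulVec, ← Sum.elim_comp_inl_inr x, schur_complement_eq₂₂ A B _ _ hD.1]
    by_cases hx1 : x ∘ Sum.inl = 0
    · have hx2 : (D⁻¹ * Bᴴ) *ᵥ (x ∘ Sum.inl) + x ∘ Sum.inr = x ∘ Sum.inr := by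
        rw [hx1]; simp
      have hx2' : x ∘ Sum.inr ≠ 0 := by
        intro h
        apply hx
        ext (i | i)
        · exact congrFun hx1 i
        · exact congrFun h i
      rw [hx2, hx1]
      have h3 := hD.dotProduct_mulVec_pos hx2'
      rw [dotProduct_mulVec] at h3
      simpa using h3
    · have h3 := h2 hx1
      rw [dotProduct_mulVec] at h3
      have h4 := hD.posSemidef.dotProduct_mulVec_nonneg ((D⁻¹ * Bᴴ) *ᵥ (x ∘ Sum.inl) + x ∘ Sum.inr)
      rw [dotProduct_mulVec] at h4
      positivity

/-- Strict Schur product theorem over ℝ: the Hadamard product of a positive definite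
matrix with a positive semidefinite matrix with strictly positive diagonal is
positive definite. -/
theorem hadamard_posDef' {m : Type*} [Fintype m] [DecidableEq m] {X S : Matrix m m ℝ}
    (hX : X.PosDef) (hS : S.PosSemidef) (hd : ∀ i, 0 < S i i) :
    (X.hadamard S).PosDef := by
  open scoped MatrixOrder in
  obtain ⟨L, hL⟩ := CStarAlgebra.nonneg_iff_eq_star_mul_self.mp hS.nonneg
  rw [star_eq_conjTranspose] at hL; subst hL
  refine .of_dotProduct_mulVec_pos ?_ (fun x hx => ?_)
  · ext i j
    simp only [conjTranspose_apply, hadamard_apply, star_trivial]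
    rw [← hX.1.apply i j, ← hS.1.apply i j]
    simp
  · have key : (star x) ⬝ᵥ (X.hadamard (Lᴴ * L)) *ᵥ x
        = ∑ k, (star (fun i => L k i * x i)) ⬝ᵥ X *ᵥ (fun i => L k i * x i) := by
      simp only [dotProduct, mulVec, hadamard_apply, Matrix.mul_apply, conjTranspose_apply,
        star_trivial, Finset.mul_sum, Finset.sum_mul]
      rw [Finset.sum_congr rfl (fun i _ => Finset.sum_comm), Finset.sum_comm]
      refine Finset.sum_congr rfl fun k _ => Finset.sum_congr rfl fun i _ =>
        Finset.sum_congr rfl fun j _ => ?_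
      ring
    rw [key]
    obtain ⟨i₀, hi₀⟩ := Function.ne_iff.mp hx
    rw [Pi.zero_apply] at hi₀
    have hk : ∃ k, L k i₀ ≠ 0 := by
      by_contra h
      push_neg at h
      have := hd i₀
      simp only [Matrix.mul_apply, conjTranspose_apply, star_trivial] at this
      rw [Finset.sum_eq_zero (fun k _ => by rw [h k]; ring)] at this
      exact lt_irrefl _ this
    obtain ⟨k₀, hk₀⟩ := hk
    refine Finset.sum_pos' (fun k _ => hX.posSemidef.dotProduct_mulVec_nonneg _) ⟨k₀, Finset.mem_univ _, ?_⟩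
    exact hX.dotProduct_mulVec_pos (Function.ne_iff.mpr ⟨i₀, by simp [hk₀, hi₀]⟩)

/-- The pair `(A, B)` is diagonally Riccati stable. -/
def DiagRiccatiStable {m : ℕ} (A B : Matrix (Fin m) (Fin m) ℝ) : Prop :=
  ∃ P Q : Matrix (Fin m) (Fin m) ℝ, P.IsDiag ∧ Q.IsDiag ∧ P.PosDef ∧ Q.PosDef ∧
    (-(Aᵀ * P + P * A + Q + P * B * Q⁻¹ * Bᵀ * P)).PosDef

theorem hadamard_preserves_diag_riccati {n : ℕ} (A B : Matrix (Fin n) (Fin n) ℝ)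
    (hAB : DiagRiccatiStable A B)
    (S : Matrix (Fin n ⊕ Fin n) (Fin n ⊕ Fin n) ℝ) (hS : S.PosSemidef)
    (hdiag : ∀ i : Fin n, S (Sum.inl i) (Sum.inl i) = S (Sum.inr i) (Sum.inr i))
    (hpos : ∀ i : Fin n, 0 < S (Sum.inl i) (Sum.inl i)) :
    DiagRiccatiStable (A.hadamard S.toBlocks₁₁) (B.hadamard S.toBlocks₁₂) := by
  obtain ⟨P, Q, hPd, hQd, hPpd, hQpd, hR⟩ := hAB
  -- basic facts
  have hPt : Pᵀ = P := by
    rw [← conjTranspose_eq_transpose_of_trivial]; exact hPpd.1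
  have hPmul : ∀ (M : Matrix (Fin n) (Fin n) ℝ) i j, (P * M) i j = P i i * M i j := by
    intro M i j
    rw [Matrix.mul_apply]
    exact Finset.sum_eq_single i (fun k _ hk => by rw [hPd (Ne.symm hk), zero_mul])
      (fun h => absurd (Finset.mem_univ i) h)
  have hmulP : ∀ (M : Matrix (Fin n) (Fin n) ℝ) i j, (M * P) i j = M i j * P j j := by
    intro M i j
    rw [Matrix.mul_apply]
    exact Finset.sum_eq_single j (fun k _ hk => by rw [hPd hk, mul_zero])
      (fun h => absurd (Finset.mem_univ j) h)
  have hSsymm : ∀ a b, S a b = S b a := fun a b => by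
    rw [← hS.1.apply a b, star_trivial]
  have hQQ : ∀ i, 0 < Q i i := by
    intro i
    have h1 : (Pi.single i 1 : Fin n → ℝ) ≠ 0 := by
      intro h
      have := congrFun h i
      simp at this
    have := hQpd.dotProduct_mulVec_pos h1
    simpa using this
  set d : Fin n → ℝ := fun i => S (Sum.inl i) (Sum.inl i) with hd
  set Q' : Matrix (Fin n) (Fin n) ℝ := Matrix.diagonal (fun i => Q i i * d i) with hQ'
  have hQ'pd : Q'.PosDef := Matrix.PosDef.diagonal (fun i => mul_pos (hQQ i) (hpos i))
  set A' : Matrix (Fin n) (Fin n) ℝ := A.hadamard S.toBlocks₁₁ with hA'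
  set B' : Matrix (Fin n) (Fin n) ℝ := B.hadamard S.toBlocks₁₂ with hB'
  refine ⟨P, Q', hPd, Matrix.isDiag_diagonal _, hPpd, hQ'pd, ?_⟩
  -- forward Schur complement
  have hN : (fromBlocks (-(Aᵀ * P + P * A + Q)) (-(P * B)) (-(P * B))ᴴ Q).PosDef := by
    apply (posDef_fromBlocks₂₂' _ _ hQpd).mpr
    have ht : (-(P * B))ᴴ = -(Bᵀ * P) := by
      rw [conjTranspose_eq_transpose_of_trivial, transpose_neg, transpose_mul, hPt]
    rw [ht]
    convert hR using 1
    simp only [Matrix.neg_mul, Matrix.mul_neg, neg_neg, Matrix.mul_assoc]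
    abel
  -- Hadamard with S
  have hNS : ((fromBlocks (-(Aᵀ * P + P * A + Q)) (-(P * B)) (-(P * B))ᴴ Q).hadamard S).PosDef := by
    refine hadamard_posDef' hN hS ?_
    rintro (i | i)
    · exact hpos i
    · rw [← hdiag i]; exact hpos i
  -- identify blocks
  have hEq : (fromBlocks (-(Aᵀ * P + P * A + Q)) (-(P * B)) (-(P * B))ᴴ Q).hadamard S
      = fromBlocks (-(A'ᵀ * P + P * A' + Q')) (-(P * B')) (-(P * B'))ᴴ Q' := by
    ext (i | i) (j | j)
    · simp only [hadamard_apply, fromBlocks_apply₁₁, Matrix.neg_apply, Matrix.add_apply, transpose_apply,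
        hPmul, hmulP, hA', Matrix.hadamard_apply, Matrix.toBlocks₁₁, of_apply, hQ']
      by_cases hij : i = j
      · subst hij; rw [diagonal_apply_eq]; simp only [hd]; ring
      · rw [diagonal_apply_ne _ hij, hQd hij, hSsymm (Sum.inl j) (Sum.inl i)]; ring
    · simp only [hadamard_apply, fromBlocks_apply₁₂, Matrix.neg_apply, hPmul, hB',
        Matrix.hadamard_apply, Matrix.toBlocks₁₂, of_apply]
      ring
    · simp only [hadamard_apply, fromBlocks_apply₂₁, conjTranspose_apply, star_trivial,
        Matrix.neg_apply, hPmul, hB', Matrix.hadamard_apply, Matrix.toBlocks₁₂, of_apply]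
      rw [hSsymm (Sum.inr i) (Sum.inl j)]
      ring
    · simp only [hadamard_apply, fromBlocks_apply₂₂, hQ']
      by_cases hij : i = j
      · subst hij; rw [diagonal_apply_eq, ← hdiag i]
      · rw [diagonal_apply_ne _ hij, hQd hij, zero_mul]
  rw [hEq] at hNS
  -- backward Schur complement
  have := (posDef_fromBlocks₂₂' _ _ hQ'pd).mp hNS
  have ht : (-(P * B'))ᴴ = -(B'ᵀ * P) := by
    rw [conjTranspose_eq_transpose_of_trivial, transpose_neg, transpose_mul, hPt]
  rw [ht] at this
  convert this using 1
  simp only [Matrix.neg_mul, Matrix.mul_neg, neg_neg, Matrix.mul_assoc]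
  abel
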